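/- Nonreciprocal clustering satisfies the Axiom of Transformation: if φ : X → Y satisfies A_X(x,x') ≥ A_Y(φ(x), φ(x')) for all x, x' ∈ X, then u^{NR}_X(x,x') ≥ u^{NR}_Y(φ(x), φ(x')) for all x, x' ∈ X. -/
import Mathlib


/-- Maximum dissimilarity over consecutive links of a chain (list of nodes). -/
def listCost {X : Type*} (A : X → X → ℝ) (l : List X) : ℝ :=
  (l.zip l.tail).foldr (fun p r => max (A p.1 p.2) r) 0

/-- Minimum over chains from `x` to `x'` of the maximum link cost. -/
noncomputable def minChainCost {X : Type*} (A : X → X → ℝ) (x x' : X) : ℝ :=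
  sInf {c : ℝ | ∃ l : List X, l.head? = some x ∧ l.getLast? = some x' ∧ listCost A l = c}

/-- Symmetrized dissimilarity Ā. -/
def symDis {X : Type*} (A : X → X → ℝ) (x x' : X) : ℝ := max (A x x') (A x' x)

/-- Reciprocal ultrametric. -/
noncomputable def uR {X : Type*} (A : X → X → ℝ) (x x' : X) : ℝ := minChainCost (symDis A) x x'

/-- Nonreciprocal ultrametric. -/
noncomputable def uNR {X : Type*} (A : X → X → ℝ) (x x' : X) : ℝ :=
  max (minChainCost A x x') (minChainCost A x' x)

/-- A (finite, asymmetric) network dissimilarity: nonnegative, vanishing exactly on the diagonal. -/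
def IsNetwork {X : Type*} (A : X → X → ℝ) : Prop :=
  (∀ x x', 0 ≤ A x x') ∧ (∀ x x', A x x' = 0 ↔ x = x')

/-- Ultrametric: nonnegative, symmetric, identity of indiscernibles, strong triangle inequality. -/
def IsUltra {X : Type*} (u : X → X → ℝ) : Prop :=
  (∀ x x', 0 ≤ u x x') ∧ (∀ x x', u x x' = u x' x) ∧
  (∀ x x', u x x' = 0 ↔ x = x') ∧
  (∀ x x' x'', u x x' ≤ max (u x x'') (u x'' x'))


lemma listCost_nonneg {X : Type*} (A : X → X → ℝ) (l : List X) : 0 ≤ listCost A l := by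
  unfold listCost
  induction (l.zip l.tail) with
  | nil => simp
  | cons p t ih => simp only [List.foldr_cons]; exact le_trans ih (le_max_right _ _)

lemma listCost_map_le {X Y : Type*} (A_X : X → X → ℝ) (A_Y : Y → Y → ℝ) (φ : X → Y)
    (hφ : ∀ x x' : X, A_Y (φ x) (φ x') ≤ A_X x x') :
    ∀ l : List X, listCost A_Y (l.map φ) ≤ listCost A_X l := by
  intro l
  induction l with
  | nil => simp [listCost]
  | cons a t ih =>
    cases t with
    | nil => simp [listCost]
    | cons b t' =>
      simp only [listCost, List.map_cons, List.tail_cons, List.zip_cons_cons,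
        List.foldr_cons] at ih ⊢
      exact max_le_max (hφ a b) ih

lemma minChainCost_map_le {X Y : Type*} (A_X : X → X → ℝ) (A_Y : Y → Y → ℝ) (φ : X → Y)
    (hφ : ∀ x x' : X, A_Y (φ x) (φ x') ≤ A_X x x') (x x' : X) :
    minChainCost A_Y (φ x) (φ x') ≤ minChainCost A_X x x' := by
  unfold minChainCost
  apply le_csInf
  · exact ⟨listCost A_X [x, x'], [x, x'], by simp, by simp, rfl⟩
  · rintro c ⟨l, hh, hl, rfl⟩
    have hmem : listCost A_Y (l.map φ) ∈
        {c : ℝ | ∃ l : List Y, l.head? = some (φ x) ∧ l.getLast? = some (φ x') ∧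
          listCost A_Y l = c} := by
      refine ⟨l.map φ, ?_, ?_, rfl⟩
      · rw [List.head?_map, hh]; rfl
      · rw [List.getLast?_map, hl]; rfl
    have hbdd : BddBelow {c : ℝ | ∃ l : List Y, l.head? = some (φ x) ∧
        l.getLast? = some (φ x') ∧ listCost A_Y l = c} := by
      refine ⟨0, ?_⟩
      rintro c ⟨l, -, -, rfl⟩
      exact listCost_nonneg _ _
    exact le_trans (csInf_le hbdd hmem) (listCost_map_le A_X A_Y φ hφ l)

theorem nonreciprocal_axiom_of_transformation {X Y : Type*} [Fintype X] [Fintype Y]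
    (A_X : X → X → ℝ) (A_Y : Y → Y → ℝ) (hX : IsNetwork A_X) (hY : IsNetwork A_Y)
    (φ : X → Y) (hφ : ∀ x x' : X, A_Y (φ x) (φ x') ≤ A_X x x') :
    ∀ x x' : X, uNR A_Y (φ x) (φ x') ≤ uNR A_X x x' := by
  intro x x'
  exact max_le_max (minChainCost_map_le A_X A_Y φ hφ x x')
    (minChainCost_map_le A_X A_Y φ hφ x' x)
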